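/- arXiv:0812.1475 — 4 statements merged into one kernel-verified Lean document; each statement's English description precedes it below -/
import Mathlib

section
/- Let ⊥T = {M : Hom(M,T) = 0 = Ext^1(M,T)} for a rigid module T over a hereditary artin algebra Λ. Then ⊥T is an exact abelian subcategory of mod Λ closed under extensions, kernels and cokernels, and is itself hereditary (Ext^2 vanishes in ⊥T). -/
/-- `X` is (isomorphic to) a direct summand of `M`. -/
def IsSummand (Λ : Type) [Ring Λ] (X M : Type) [AddCommGroup X] [Module Λ X]
    [AddCommGroup M] [Module Λ M] : Prop :=
  ∃ (i : X →ₗ[Λ] M) (p : M →ₗ[Λ] X), p ∘ₗ i = LinearMap.id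

/-- `X` belongs to `add T`, the additive subcategory generated by the
indecomposable direct summands of `T`. -/
def InAdd (Λ : Type) [Ring Λ] (T X : Type) [AddCommGroup T] [Module Λ T]
    [AddCommGroup X] [Module Λ X] : Prop :=
  ∃ n : ℕ, IsSummand Λ X (Fin n → T)

/-- `Ext¹_Λ(A, B) = 0`: every short exact sequence `0 → B → E → A → 0` splits. -/
def Ext1Zero (Λ : Type) [Ring Λ] (A B : Type) [AddCommGroup A] [Module Λ A]
    [AddCommGroup B] [Module Λ B] : Prop :=
  ∀ (E : Type) [AddCommGroup E] [Module Λ E] (i : B →ₗ[Λ] E) (p : E →ₗ[Λ] A),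
    Function.Injective i → Function.Surjective p → LinearMap.ker p = LinearMap.range i →
    ∃ r : E →ₗ[Λ] B, r ∘ₗ i = LinearMap.id

/-- An indecomposable module: nonzero, and admitting no nontrivial direct sum
decomposition. -/
def IsIndec (Λ : Type) [Ring Λ] (M : Type) [AddCommGroup M] [Module Λ M] : Prop :=
  (∃ m : M, m ≠ 0) ∧ ∀ N N' : Submodule Λ M, IsCompl N N' → N = ⊥ ∨ N' = ⊥

/-- A hereditary ring: submodules of projective modules are projective. -/
def IsHereditaryRing (Λ : Type) [Ring Λ] : Prop :=
  ∀ (M : Type) [AddCommGroup M] [Module Λ M], Module.Projective Λ M →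
    ∀ N : Submodule Λ M, Module.Projective Λ N

/-- Membership in the left perpendicular category
`⊥T = {M : Hom(M,T) = 0 = Ext¹(M,T)}`. -/
def InLeftPerp (Λ : Type) [Ring Λ] (T M : Type) [AddCommGroup T] [Module Λ T]
    [AddCommGroup M] [Module Λ M] : Prop :=
  (∀ f : M →ₗ[Λ] T, f = 0) ∧ Ext1Zero Λ M T



open LinearMap Function

section Helpers
variable {Λ : Type} [Ring Λ]

/-- Descend a linear map along a surjection whose kernel it kills. -/
private lemma descend' {M N T : Type} [AddCommGroup M] [Module Λ M] [AddCommGroup N]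
    [Module Λ N] [AddCommGroup T] [Module Λ T] (u : M →ₗ[Λ] N) (θ : M →ₗ[Λ] T)
    (hu : Function.Surjective u) (h : ∀ x, u x = 0 → θ x = 0) :
    ∃ ψ : N →ₗ[Λ] T, ∀ x, ψ (u x) = θ x := by
  let m : (M ⧸ LinearMap.ker u) →ₗ[Λ] N := Submodule.liftQ _ u le_rfl
  have hm : ∀ x : M, m (Submodule.Quotient.mk x) = u x := fun x => rfl
  have hminj : Function.Injective m := by
    rw [← LinearMap.ker_eq_bot, Submodule.ker_liftQ_eq_bot]
    exact le_rfl
  have hmsurj : Function.Surjective m := by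
    intro n; obtain ⟨x, rfl⟩ := hu n; exact ⟨Submodule.Quotient.mk x, rfl⟩
  let e : (M ⧸ LinearMap.ker u) ≃ₗ[Λ] N := LinearEquiv.ofBijective m ⟨hminj, hmsurj⟩
  refine ⟨(Submodule.liftQ _ θ (fun x hx => h x hx)) ∘ₗ (e.symm.toLinearMap), fun x => ?_⟩
  have : e.symm (u x) = Submodule.Quotient.mk x := by
    apply e.injective; rw [e.apply_symm_apply]; rfl
  simp only [LinearMap.comp_apply, LinearEquiv.coe_coe, this]
  rfl

/-- Corestrict a map landing in the range of an injection. -/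
private lemma corestrict' {A M Z : Type} [AddCommGroup A] [Module Λ A] [AddCommGroup M]
    [Module Λ M] [AddCommGroup Z] [Module Λ Z] (i : A →ₗ[Λ] M) (hi : Function.Injective i)
    (q : Z →ₗ[Λ] M) (h : ∀ z, ∃ a, i a = q z) :
    ∃ q' : Z →ₗ[Λ] A, ∀ z, i (q' z) = q z := by
  let e := LinearEquiv.ofInjective i hi
  refine ⟨(e.symm : LinearMap.range i →ₗ[Λ] A) ∘ₗ
    LinearMap.codRestrict (LinearMap.range i) q (fun z => (h z).imp (fun a ha => ha)), fun z => ?_⟩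
  have : ∀ y : LinearMap.range i, i (e.symm y) = (y : M) := by
    intro y
    conv_rhs => rw [← e.apply_symm_apply y]
    rw [LinearEquiv.ofInjective_apply]
  have key : i (e.symm (LinearMap.codRestrict (LinearMap.range i) q
      (fun z => (h z).imp (fun a ha => ha)) z)) = q z := this _
  simpa using key

end Helpers

section Main
variable {Λ : Type} [Ring Λ]

private lemma pushout' {A B M C : Type} [AddCommGroup A] [Module Λ A] [AddCommGroup B]
    [Module Λ B] [AddCommGroup M] [Module Λ M] [AddCommGroup C] [Module Λ C]
    (α : A →ₗ[Λ] B) (β : A →ₗ[Λ] M) (hβ : Function.Injective β)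
    (p : M →ₗ[Λ] C) (hp : Function.Surjective p) (hker : LinearMap.ker p = LinearMap.range β) :
    ∃ (P : Type) (_ : AddCommGroup P) (_ : Module Λ P) (ιB : B →ₗ[Λ] P) (π : P →ₗ[Λ] C)
      (ιM : M →ₗ[Λ] P),
      Function.Injective ιB ∧ Function.Surjective π ∧ LinearMap.ker π = LinearMap.range ιB ∧
      (∀ a, ιM (β a) = ιB (α a)) ∧ (∀ m, π (ιM m) = p m) ∧
      (∀ y, ∃ b m, y = ιB b + ιM m) ∧
      (∀ (X : Type) [AddCommGroup X] [Module Λ X] (u : B →ₗ[Λ] X) (v : M →ₗ[Λ] X),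
        (∀ a, u (α a) = v (β a)) →
        ∃ w : P →ₗ[Λ] X, (∀ b, w (ιB b) = u b) ∧ ∀ m, w (ιM m) = v m) := by
  classical
  set W : Submodule Λ (B × M) := LinearMap.range (LinearMap.prod α (-β)) with hW
  have hWmem : ∀ x : B × M, x ∈ W ↔ ∃ a, α a = x.1 ∧ -β a = x.2 := by
    intro x
    constructor
    · rintro ⟨a, ha⟩
      exact ⟨a, congrArg Prod.fst ha, congrArg Prod.snd ha⟩
    · rintro ⟨a, h1, h2⟩
      exact ⟨a, Prod.ext h1 h2⟩
  have hπ0 : ∀ x ∈ W, (p ∘ₗ LinearMap.snd Λ B M) x = 0 := by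
    rintro x hx
    obtain ⟨a, _, h2⟩ := (hWmem x).1 hx
    have : β a ∈ LinearMap.ker p := by rw [hker]; exact ⟨a, rfl⟩
    simp only [LinearMap.comp_apply, LinearMap.snd_apply, ← h2, map_neg]
    simpa using this
  refine ⟨(B × M) ⧸ W, inferInstance, inferInstance,
    W.mkQ ∘ₗ LinearMap.inl Λ B M,
    Submodule.liftQ W (p ∘ₗ LinearMap.snd Λ B M) (fun x hx => LinearMap.mem_ker.mpr (hπ0 x hx)),
    W.mkQ ∘ₗ LinearMap.inr Λ B M, ?_, ?_, ?_, ?_, ?_, ?_, ?_⟩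
  · -- injective ιB
    intro b b' hbb'
    have h := (Submodule.Quotient.eq W).mp hbb'
    obtain ⟨a, h1, h2⟩ := (hWmem _).1 h
    have ha0 : a = 0 := hβ (by simpa [neg_eq_zero] using h2.symm)
    have : b - b' = 0 := by simp only [ha0, map_zero] at h1; simpa using h1.symm
    exact sub_eq_zero.mp this
  · -- surjective π
    intro c
    obtain ⟨m, rfl⟩ := hp c
    exact ⟨Submodule.Quotient.mk (0, m), by simp⟩
  · -- ker π = range ιB
    apply le_antisymm
    · rintro y hy
      obtain ⟨⟨b, m⟩, rfl⟩ := Submodule.Quotient.mk_surjective W y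
      have hm : p m = 0 := by simpa using hy
      have : m ∈ LinearMap.range β := by rw [← hker]; exact hm
      obtain ⟨a, rfl⟩ := this
      refine ⟨b + α a, ?_⟩
      simp only [LinearMap.comp_apply, LinearMap.inl_apply, Submodule.mkQ_apply]
      rw [Submodule.Quotient.eq]
      exact (hWmem _).2 ⟨a, by simp, by simp⟩
    · rintro y ⟨b, rfl⟩
      simp
  · intro a
    simp only [LinearMap.comp_apply, LinearMap.inl_apply, LinearMap.inr_apply,
      Submodule.mkQ_apply]
    rw [Submodule.Quotient.eq]
    exact (hWmem _).2 ⟨-a, by simp, by simp⟩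
  · intro m; simp
  · intro y
    obtain ⟨⟨b, m⟩, rfl⟩ := Submodule.Quotient.mk_surjective W y
    refine ⟨b, m, ?_⟩
    simp only [LinearMap.comp_apply, LinearMap.inl_apply, LinearMap.inr_apply,
      Submodule.mkQ_apply, ← map_add]
    congr 1
    simp [Prod.ext_iff]
  · intro X _ _ u v huv
    have hcop : ∀ x ∈ W, (LinearMap.coprod u v) x = 0 := by
      rintro x hx
      obtain ⟨a, h1, h2⟩ := (hWmem x).1 hx
      simp only [LinearMap.coprod_apply, ← h1, ← h2, map_neg, huv a]
      abel
    refine ⟨Submodule.liftQ W (LinearMap.coprod u v) (fun x hx => LinearMap.mem_ker.mpr (hcop x hx)), fun b => by simp, fun m => by simp⟩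

private lemma hom_sub_zero {A M C T : Type} [AddCommGroup A] [Module Λ A] [AddCommGroup M]
    [Module Λ M] [AddCommGroup C] [Module Λ C] [AddCommGroup T] [Module Λ T]
    (i : A →ₗ[Λ] M) (p : M →ₗ[Λ] C) (hi : Function.Injective i) (hp : Function.Surjective p)
    (hexact : LinearMap.ker p = LinearMap.range i)
    (hM : ∀ g : M →ₗ[Λ] T, g = 0) (hC : Ext1Zero Λ C T) :
    ∀ f : A →ₗ[Λ] T, f = 0 := by
  intro f
  obtain ⟨P, _, _, ιT, π, ιM, hιT, hπ, hkπ, hrel, _, _, _⟩ := pushout' f i hi p hp hexact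
  obtain ⟨r, hr⟩ := hC P ιT π hιT hπ hkπ
  have hrM : r ∘ₗ ιM = 0 := hM _
  ext a
  have h1 : r (ιM (i a)) = 0 := by
    have := LinearMap.congr_fun hrM (i a); simpa using this
  have h2 : r (ιT (f a)) = f a := by
    have := LinearMap.congr_fun hr (f a); simpa using this
  rw [hrel a] at h1
  simp [h2] at h1
  simpa using h1

private lemma ext_quot_zero {A N C T : Type} [AddCommGroup A] [Module Λ A] [AddCommGroup N]
    [Module Λ N] [AddCommGroup C] [Module Λ C] [AddCommGroup T] [Module Λ T]
    (i : A →ₗ[Λ] N) (p : N →ₗ[Λ] C) (hp : Function.Surjective p)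
    (hexact : LinearMap.ker p = LinearMap.range i)
    (hA : ∀ f : A →ₗ[Λ] T, f = 0) (hN : Ext1Zero Λ N T) : Ext1Zero Λ C T := by
  intro Z _ _ j q hj hq hex
  -- pullback of q and p
  set ZN : Submodule Λ (Z × N) :=
    LinearMap.ker ((q ∘ₗ LinearMap.fst Λ Z N) - (p ∘ₗ LinearMap.snd Λ Z N)) with hZN
  have hmem : ∀ x : Z × N, x ∈ ZN ↔ q x.1 = p x.2 := by
    intro x
    simp [hZN, sub_eq_zero]
  have hqj : ∀ t, q (j t) = 0 := by
    intro t
    have : j t ∈ LinearMap.ker q := by rw [hex]; exact ⟨t, rfl⟩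
    simpa using this
  set j' : T →ₗ[Λ] ZN := LinearMap.codRestrict ZN (LinearMap.prod j 0)
    (fun t => (hmem _).2 (by simp [hqj t])) with hj'
  set q' : ZN →ₗ[Λ] N := LinearMap.snd Λ Z N ∘ₗ ZN.subtype with hq'
  have hj'inj : Function.Injective j' := by
    intro t t' h
    apply hj
    have := congrArg (fun x : ZN => (x : Z × N).1) h
    simpa [hj'] using this
  have hq'surj : Function.Surjective q' := by
    intro n
    obtain ⟨z, hz⟩ := hq (p n)
    exact ⟨⟨(z, n), (hmem _).2 hz⟩, rfl⟩
  have hker' : LinearMap.ker q' = LinearMap.range j' := by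
    apply le_antisymm
    · rintro ⟨⟨z, n⟩, hzn⟩ h
      have hn : n = 0 := by simpa [hq'] using h
      subst hn
      have : q z = 0 := by simpa using (hmem _).1 hzn
      have : z ∈ LinearMap.range j := by rw [← hex]; exact this
      obtain ⟨t, rfl⟩ := this
      exact ⟨t, by apply Subtype.ext; simp [hj']⟩
    · rintro x ⟨t, rfl⟩
      simp [hq', hj']
  obtain ⟨r₁, hr₁⟩ := hN ZN j' q' hj'inj hq'surj hker'
  set s : ZN →ₗ[Λ] Z := LinearMap.fst Λ Z N ∘ₗ ZN.subtype with hs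
  have hssurj : Function.Surjective s := by
    intro z
    obtain ⟨n, hn⟩ := hp (q z)
    exact ⟨⟨(z, n), (hmem _).2 hn.symm⟩, rfl⟩
  set μ : A →ₗ[Λ] ZN := LinearMap.codRestrict ZN (LinearMap.prod 0 i)
    (fun a => (hmem _).2 (by
      have : i a ∈ LinearMap.ker p := by rw [hexact]; exact ⟨a, rfl⟩
      simpa using this.symm)) with hμ
  have hkills : ∀ x : ZN, s x = 0 → r₁ x = 0 := by
    intro x hx
    have h1 : (x : Z × N).1 = 0 := by simpa [hs] using hx
    have h2 : p (x : Z × N).2 = 0 := by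
      have := (hmem _).1 x.2
      rw [h1] at this; simpa using this.symm
    have : (x : Z × N).2 ∈ LinearMap.range i := by rw [← hexact]; exact h2
    obtain ⟨a, ha⟩ := this
    have hxμ : x = μ a := by
      apply Subtype.ext
      apply Prod.ext
      · simp [hμ, h1]
      · simp [hμ, ha]
    have : r₁ ∘ₗ μ = 0 := hA _
    rw [hxμ]
    simpa using LinearMap.congr_fun this a
  obtain ⟨r, hr⟩ := descend' s r₁ hssurj hkills
  refine ⟨r, ?_⟩
  ext t
  have h1 : s (j' t) = j t := by simp [hs, hj']
  have h2 : r₁ (j' t) = t := by simpa using LinearMap.congr_fun hr₁ t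
  simp only [LinearMap.comp_apply, LinearMap.id_apply]
  rw [← h1, hr, h2]

private lemma ext_ext_zero {A E C T : Type} [AddCommGroup A] [Module Λ A] [AddCommGroup E]
    [Module Λ E] [AddCommGroup C] [Module Λ C] [AddCommGroup T] [Module Λ T]
    (i : A →ₗ[Λ] E) (p : E →ₗ[Λ] C) (hi : Function.Injective i) (hp : Function.Surjective p)
    (hexact : LinearMap.ker p = LinearMap.range i)
    (hA : Ext1Zero Λ A T) (hC : Ext1Zero Λ C T) : Ext1Zero Λ E T := by
  intro Z _ _ j q hj hq hex
  have hqj : ∀ t, q (j t) = 0 := fun t => by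
    have : j t ∈ LinearMap.ker q := by rw [hex]; exact ⟨t, rfl⟩
    simpa using this
  have hpi : ∀ a, p (i a) = 0 := fun a => by
    have : i a ∈ LinearMap.ker p := by rw [hexact]; exact ⟨a, rfl⟩
    simpa using this
  set ZA : Submodule Λ Z := Submodule.comap q (LinearMap.range i) with hZA
  have hmem : ∀ z : Z, z ∈ ZA ↔ ∃ a, i a = q z := fun z => Iff.rfl
  have hjZA : ∀ t, j t ∈ ZA := fun t => (hmem _).2 ⟨0, by simp [hqj t]⟩
  set jA : T →ₗ[Λ] ZA := LinearMap.codRestrict ZA j hjZA with hjA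
  obtain ⟨qA, hqA⟩ := corestrict' i hi (q ∘ₗ ZA.subtype) (fun z => z.2)
  have hqAsurj : Function.Surjective qA := by
    intro a
    obtain ⟨z, hz⟩ := hq (i a)
    refine ⟨⟨z, (hmem _).2 ⟨a, hz.symm⟩⟩, hi ?_⟩
    rw [hqA]; simpa using hz
  have hjAinj : Function.Injective jA := by
    intro t t' h
    apply hj
    have := congrArg (fun x : ZA => (x : Z)) h
    simpa [hjA] using this
  have hkerA : LinearMap.ker qA = LinearMap.range jA := by
    apply le_antisymm
    · intro x hx
      have h0 : qA x = 0 := hx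
      have : q (x : Z) = 0 := by
        have h1 := hqA x
        rw [h0, map_zero] at h1
        simpa using h1.symm
      have : (x : Z) ∈ LinearMap.range j := by rw [← hex]; exact this
      obtain ⟨t, ht⟩ := this
      exact ⟨t, Subtype.ext (by simp [hjA, ht])⟩
    · rintro x ⟨t, rfl⟩
      have : i (qA (jA t)) = 0 := by rw [hqA]; simp [hjA, hqj t]
      have := hi (by simpa using this : i (qA (jA t)) = i 0)
      simpa using this
  obtain ⟨r₁, hr₁⟩ := hA ZA jA qA hjAinj hqAsurj hkerA
  set S : Submodule Λ Z := Submodule.map ZA.subtype (LinearMap.ker r₁) with hS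
  have hSle : ∀ z ∈ S, p (q z) = 0 := by
    rintro z ⟨x, hx, rfl⟩
    obtain ⟨a, ha⟩ := (hmem _).1 x.2
    simp only [Submodule.coe_subtype, ← ha, hpi a]
  set pQ : (Z ⧸ S) →ₗ[Λ] C := Submodule.liftQ S (p ∘ₗ q) (fun z hz => LinearMap.mem_ker.mpr (hSle z hz)) with hpQ
  set jQ : T →ₗ[Λ] (Z ⧸ S) := S.mkQ ∘ₗ j with hjQ
  have hjQinj : Function.Injective jQ := by
    intro t t' h
    apply hj
    have hd : j t - j t' ∈ S := (Submodule.Quotient.eq S).mp (by simpa [hjQ] using h)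
    obtain ⟨x, hx, hxx⟩ := Submodule.mem_map.mp hd
    have hxe : x = jA t - jA t' := Subtype.ext (by simpa [hjA] using hxx)
    rw [hxe] at hx
    have hx0 : r₁ (jA t - jA t') = 0 := hx
    have hx' : r₁ (jA t) = r₁ (jA t') := by
      rw [map_sub, sub_eq_zero] at hx0; exact hx0
    have e1 : r₁ (jA t) = t := by simpa using LinearMap.congr_fun hr₁ t
    have e2 : r₁ (jA t') = t' := by simpa using LinearMap.congr_fun hr₁ t'
    rw [e1, e2] at hx'
    rw [hx']
  have hpQsurj : Function.Surjective pQ := by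
    intro c
    obtain ⟨e, he⟩ := hp c
    obtain ⟨z, hz⟩ := hq e
    exact ⟨S.mkQ z, by simp [hpQ, hz, he]⟩
  have hkerQ : LinearMap.ker pQ = LinearMap.range jQ := by
    apply le_antisymm
    · intro y hy
      obtain ⟨z, rfl⟩ := S.mkQ_surjective y
      have hz : p (q z) = 0 := by simpa [hpQ] using hy
      have : q z ∈ LinearMap.range i := by rw [← hexact]; exact hz
      have hzZA : z ∈ ZA := this
      set t := r₁ ⟨z, hzZA⟩ with ht
      refine ⟨t, ?_⟩
      have hdiff : z - j t ∈ S := by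
        refine Submodule.mem_map.mpr ⟨⟨z, hzZA⟩ - jA t, ?_, by simp [hjA]⟩
        rw [LinearMap.mem_ker, map_sub]
        have e1 : r₁ (jA t) = t := by simpa using LinearMap.congr_fun hr₁ t
        rw [e1, ← ht, sub_self]
      have hdiff' : j t - z ∈ S := by
        have := S.neg_mem hdiff
        simpa [neg_sub] using this
      simp only [hjQ, LinearMap.comp_apply, Submodule.mkQ_apply]
      exact (Submodule.Quotient.eq S).mpr hdiff'
    · rintro y ⟨t, rfl⟩
      simp [hjQ, hpQ, hqj t]
  obtain ⟨r₂, hr₂⟩ := hC (Z ⧸ S) jQ pQ hjQinj hpQsurj hkerQ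
  refine ⟨r₂ ∘ₗ S.mkQ, ?_⟩
  ext t
  have := LinearMap.congr_fun hr₂ t
  simpa [hjQ] using this

end Main

private lemma ext_sub_zero_aux {Λ : Type} [Ring Λ] (hH : IsHereditaryRing Λ)
    {A M T F : Type} [AddCommGroup A] [Module Λ A] [AddCommGroup M] [Module Λ M]
    [AddCommGroup T] [Module Λ T] [AddCommGroup F] [Module Λ F]
    (hFproj : Module.Projective Λ F) (π : F →ₗ[Λ] M) (hπ : Function.Surjective π)
    (i : A →ₗ[Λ] M) (hi : Function.Injective i)
    (hM : Ext1Zero Λ M T) : Ext1Zero Λ A T := by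
  intro Z _ _ j q hj hq hexact
  classical
  set K : Submodule Λ F := LinearMap.ker π with hK
  set FA : Submodule Λ F := Submodule.comap π (LinearMap.range i) with hFA
  have hKFA : K ≤ FA := by
    intro x hx
    have : π x = 0 := hx
    exact (by rw [Submodule.mem_comap, this]; exact Submodule.zero_mem _)
  haveI hFAproj : Module.Projective Λ ↥FA := hH F hFproj FA
  -- πA : FA → A
  have hsub : ∀ x : ↥FA, ∃ a, i a = (π ∘ₗ FA.subtype) x := fun x => x.2
  obtain ⟨πA, hπA⟩ := corestrict' (Z := ↥FA) i hi (π ∘ₗ FA.subtype) hsub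
  have hπAsurj : Function.Surjective πA := by
    intro a
    obtain ⟨y, hy⟩ := hπ (i a)
    refine ⟨⟨y, by rw [Submodule.mem_comap, hy]; exact ⟨a, rfl⟩⟩, hi ?_⟩
    rw [hπA]; simpa using hy
  -- lift πA along q
  obtain ⟨φ, hφ⟩ := Module.projective_lifting_property q πA hq
  -- h : K → T
  have hφK : ∀ k : K, ∃ t, j t = (φ ∘ₗ Submodule.inclusion hKFA) k := by
    intro k
    have h1 : i (πA (Submodule.inclusion hKFA k)) = π (k : F) := by rw [hπA]; rfl
    have h2 : π (k : F) = 0 := k.2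
    have h3 : πA (Submodule.inclusion hKFA k) = 0 := hi (by rw [h1, h2, map_zero])
    have h4 : q (φ (Submodule.inclusion hKFA k)) = 0 := by
      have := LinearMap.congr_fun hφ (Submodule.inclusion hKFA k)
      simp only [LinearMap.comp_apply] at this
      rw [this, h3]
    have : φ (Submodule.inclusion hKFA k) ∈ LinearMap.range j := by rw [← hexact]; exact h4
    obtain ⟨t, ht⟩ := this
    exact ⟨t, ht⟩
  obtain ⟨h, hh⟩ := corestrict' (Z := ↥K) j hj (φ ∘ₗ Submodule.inclusion hKFA) hφK
  -- pushout along K ↪ F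
  obtain ⟨P, _, _, ιT, πP, ιF, hιT, hπP, hkπP, hrel, hπPιF, _, _⟩ :=
    pushout' h K.subtype Subtype.coe_injective π hπ (Submodule.range_subtype K).symm
  obtain ⟨r', hr'⟩ := hM P ιT πP hιT hπP hkπP
  -- comparison map Z → P
  set u : T × FA →ₗ[Λ] Z := LinearMap.coprod j (φ) with hu
  set θ : T × FA →ₗ[Λ] P := LinearMap.coprod ιT (ιF ∘ₗ FA.subtype) with hθ
  have hqj : ∀ t, q (j t) = 0 := fun t => by
    have : j t ∈ LinearMap.ker q := by rw [hexact]; exact ⟨t, rfl⟩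
    simpa using this
  have husurj : Function.Surjective u := by
    intro z
    obtain ⟨x, hx⟩ := hπAsurj (q z)
    have : q (z - φ x) = 0 := by
      have := LinearMap.congr_fun hφ x
      simp only [LinearMap.comp_apply] at this
      rw [map_sub, this, hx, sub_self]
    have : z - φ x ∈ LinearMap.range j := by rw [← hexact]; exact this
    obtain ⟨t, ht⟩ := this
    exact ⟨(t, x), by simp [hu, ht]⟩
  have hkill : ∀ x : T × FA, u x = 0 → θ x = 0 := by
    rintro ⟨t, x⟩ hx
    have hx' : j t + φ x = 0 := by simpa [hu] using hx
    have h1 : i (πA x) = π (x : F) := by rw [hπA]; rfl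
    have hqφ : q (φ x) = πA x := by
      have := LinearMap.congr_fun hφ x
      simpa using this
    have h2 : πA x = 0 := by
      have := congrArg q hx'
      rw [map_add, hqj t, map_zero, zero_add, hqφ] at this
      exact this
    have h3 : π (x : F) = 0 := by rw [← h1, h2, map_zero]
    set k : K := ⟨(x : F), h3⟩ with hk
    have hincl : Submodule.inclusion hKFA k = x := Subtype.ext rfl
    have h4 : j (h k) = φ x := by rw [hh k, LinearMap.comp_apply, hincl]
    have h5 : t + h k = 0 := by
      apply hj
      rw [map_add, map_zero, h4]
      exact hx'
    have h6 : ιF (x : F) = ιT (h k) := by simpa using hrel k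
    have h7 : θ (t, x) = ιT t + ιF (x : F) := by simp [hθ]
    rw [h7, h6, ← map_add, h5, map_zero]
  obtain ⟨ψ, hψ⟩ := descend' u θ husurj hkill
  refine ⟨r' ∘ₗ ψ, ?_⟩
  ext t
  have h1 : u (t, 0) = j t := by simp [hu]
  have h2 : θ (t, 0) = ιT t := by simp [hθ]
  have h3 := hψ (t, 0)
  simp only [LinearMap.comp_apply, LinearMap.id_apply]
  rw [← h1, h3, h2]
  simpa using LinearMap.congr_fun hr' t

private lemma ext_sub_zero {Λ : Type} [Ring Λ] (hH : IsHereditaryRing Λ)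
    {A M T : Type} [AddCommGroup A] [Module Λ A] [AddCommGroup M] [Module Λ M]
    [AddCommGroup T] [Module Λ T] (i : A →ₗ[Λ] M) (hi : Function.Injective i)
    (hM : Ext1Zero Λ M T) : Ext1Zero Λ A T :=
  ext_sub_zero_aux hH inferInstance (Finsupp.linearCombination Λ (_root_.id : M → M))
    (Finsupp.linearCombination_surjective Λ Function.surjective_id) i hi hM

private lemma part3_aux {Λ : Type} [Ring Λ] (hH : IsHereditaryRing Λ)
    {A B C X F : Type} [AddCommGroup A] [Module Λ A] [AddCommGroup B] [Module Λ B]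
    [AddCommGroup C] [Module Λ C] [AddCommGroup X] [Module Λ X]
    [AddCommGroup F] [Module Λ F]
    (hFproj : Module.Projective Λ F) (π : F →ₗ[Λ] A) (hπ : Function.Surjective π)
    (g : B →ₗ[Λ] C) (hg : Function.Surjective g)
    (iX : C →ₗ[Λ] X) (pX : X →ₗ[Λ] A)
    (hiX : Function.Injective iX) (hpX : Function.Surjective pX)
    (hex : LinearMap.ker pX = LinearMap.range iX) :
    ∃ (Y : Type) (_ : AddCommGroup Y) (_ : Module Λ Y)
      (iY : B →ₗ[Λ] Y) (pY : Y →ₗ[Λ] A) (ψ : Y →ₗ[Λ] X),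
      Function.Injective iY ∧ Function.Surjective pY ∧
      LinearMap.ker pY = LinearMap.range iY ∧
      ψ ∘ₗ iY = iX ∘ₗ g ∧ pX ∘ₗ ψ = pY := by
  classical
  set K : Submodule Λ F := LinearMap.ker π with hK
  haveI hKproj : Module.Projective Λ ↥K := hH F hFproj K
  -- lift π along pX
  obtain ⟨φ, hφ⟩ := Module.projective_lifting_property pX π hpX
  -- h : K → C
  have hφK : ∀ k : K, ∃ c, iX c = (φ ∘ₗ K.subtype) k := by
    intro k
    have h1 : pX (φ (k : F)) = 0 := by
      have := LinearMap.congr_fun hφ (k : F)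
      simp only [LinearMap.comp_apply] at this
      rw [this]
      exact k.2
    have : φ (k : F) ∈ LinearMap.range iX := by rw [← hex]; exact h1
    obtain ⟨c, hc⟩ := this
    exact ⟨c, hc⟩
  obtain ⟨h, hh⟩ := corestrict' (Z := ↥K) iX hiX (φ ∘ₗ K.subtype) hφK
  -- lift h along g
  obtain ⟨h', hh'⟩ := Module.projective_lifting_property g h hg
  -- pushout of h' along K ↪ F
  obtain ⟨Y, _, _, ιB, πY, ιF, hιB, hπY, hkπY, hrel, hπYιF, hgen, huniv⟩ :=
    pushout' h' K.subtype Subtype.coe_injective π hπ (Submodule.range_subtype K).symm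
  have hcomm : ∀ k : K, (iX ∘ₗ g) (h' k) = φ ((K.subtype) k) := by
    intro k
    have h1 : g (h' k) = h k := LinearMap.congr_fun hh' k
    have h2 : iX (h k) = φ ((K.subtype) k) := by
      have := hh k
      simpa using this
    simp only [LinearMap.comp_apply, h1, h2]
  obtain ⟨ψ, hψB, hψF⟩ := huniv X (iX ∘ₗ g) φ hcomm
  refine ⟨Y, inferInstance, inferInstance, ιB, πY, ψ, hιB, hπY, hkπY, ?_, ?_⟩
  · ext b
    simpa using hψB b
  · ext y
    obtain ⟨b, m, rfl⟩ := hgen y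
    have e1 : pX (ψ (ιB b)) = 0 := by
      rw [hψB b]
      have : iX (g b) ∈ LinearMap.ker pX := by rw [hex]; exact ⟨g b, rfl⟩
      simpa using this
    have e2 : pX (ψ (ιF m)) = π m := by
      rw [hψF m]
      have := LinearMap.congr_fun hφ m
      simpa using this
    have e3 : πY (ιB b) = 0 := by
      have : ιB b ∈ LinearMap.ker πY := by rw [hkπY]; exact ⟨b, rfl⟩
      simpa using this
    simp only [LinearMap.comp_apply, map_add, e1, e2, e3, hπYιF m, zero_add]

private lemma hom_quot_zero {Λ : Type} [Ring Λ] {N C T : Type} [AddCommGroup N] [Module Λ N]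
    [AddCommGroup C] [Module Λ C] [AddCommGroup T] [Module Λ T]
    (p : N →ₗ[Λ] C) (hp : Function.Surjective p)
    (hN : ∀ g : N →ₗ[Λ] T, g = 0) : ∀ g : C →ₗ[Λ] T, g = 0 := by
  intro g
  ext c
  obtain ⟨n, rfl⟩ := hp c
  have := LinearMap.congr_fun (hN (g ∘ₗ p)) n
  simpa using this


/-- For a rigid module `T` over a hereditary artin algebra, the left
perpendicular category `⊥T` is an exact abelian subcategory of `mod Λ`:
it is closed under kernels, cokernels and extensions; and it is hereditary:
for `A, B, C ∈ ⊥T`, every extension of `A` by `C` is the pushout, along any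
given epimorphism `g : B ↠ C`, of an extension of `A` by `B` (right exactness
of `Ext¹(A,−)`, i.e. `Ext²` vanishes in `⊥T`). -/
theorem left_perp_abelian_hereditary (Λ : Type) [Ring Λ] [IsArtinianRing Λ]
    (hH : IsHereditaryRing Λ)
    (T : Type) [AddCommGroup T] [Module Λ T]
    (hTfl : IsFiniteLength Λ T) (hrigid : Ext1Zero Λ T T) :
    (∀ (M N : Type) [AddCommGroup M] [Module Λ M] [AddCommGroup N] [Module Λ N],
      InLeftPerp Λ T M → InLeftPerp Λ T N → ∀ f : M →ₗ[Λ] N,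
        InLeftPerp Λ T ↥(LinearMap.ker f) ∧ InLeftPerp Λ T (N ⧸ LinearMap.range f)) ∧
    (∀ (A E C : Type) [AddCommGroup A] [Module Λ A] [AddCommGroup E] [Module Λ E]
        [AddCommGroup C] [Module Λ C],
      InLeftPerp Λ T A → InLeftPerp Λ T C →
      ∀ (i : A →ₗ[Λ] E) (p : E →ₗ[Λ] C), Function.Injective i → Function.Surjective p →
        LinearMap.ker p = LinearMap.range i → InLeftPerp Λ T E) ∧
    (∀ (A B C : Type) [AddCommGroup A] [Module Λ A] [AddCommGroup B] [Module Λ B]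
        [AddCommGroup C] [Module Λ C],
      InLeftPerp Λ T A → InLeftPerp Λ T B → InLeftPerp Λ T C →
      ∀ g : B →ₗ[Λ] C, Function.Surjective g →
      ∀ (X : Type) [AddCommGroup X] [Module Λ X] (iX : C →ₗ[Λ] X) (pX : X →ₗ[Λ] A),
        Function.Injective iX → Function.Surjective pX →
        LinearMap.ker pX = LinearMap.range iX →
        ∃ (Y : Type) (_ : AddCommGroup Y) (_ : Module Λ Y)
          (iY : B →ₗ[Λ] Y) (pY : Y →ₗ[Λ] A) (ψ : Y →ₗ[Λ] X),
          Function.Injective iY ∧ Function.Surjective pY ∧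
          LinearMap.ker pY = LinearMap.range iY ∧
          ψ ∘ₗ iY = iX ∘ₗ g ∧ pX ∘ₗ ψ = pY) := by
  refine ⟨?_, ?_, ?_⟩
  · -- kernels and cokernels
    intro M N _ _ _ _ hM hN f
    -- the image sequence
    have hp₁ : Function.Surjective f.rangeRestrict := LinearMap.surjective_rangeRestrict f
    have hex₁ : LinearMap.ker f.rangeRestrict = LinearMap.range (LinearMap.ker f).subtype := by
      rw [LinearMap.ker_rangeRestrict, Submodule.range_subtype]
    have hex₂ : LinearMap.ker (LinearMap.range f).mkQ =
        LinearMap.range (LinearMap.range f).subtype := by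
      rw [Submodule.ker_mkQ, Submodule.range_subtype]
    -- Hom(Im f, T) = 0
    have homI : ∀ g : ↥(LinearMap.range f) →ₗ[Λ] T, g = 0 :=
      hom_quot_zero f.rangeRestrict hp₁ hM.1
    -- Ext¹(Im f, T) = 0
    have extI : Ext1Zero Λ ↥(LinearMap.range f) T :=
      ext_sub_zero hH (LinearMap.range f).subtype (Submodule.injective_subtype _) hN.2
    constructor
    · constructor
      · exact hom_sub_zero (LinearMap.ker f).subtype f.rangeRestrict
          (Submodule.injective_subtype _) hp₁ hex₁ hM.1 extI
      · exact ext_sub_zero hH (LinearMap.ker f).subtype (Submodule.injective_subtype _) hM.2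
    · constructor
      · exact hom_quot_zero (LinearMap.range f).mkQ (Submodule.mkQ_surjective _) hN.1
      · exact ext_quot_zero (LinearMap.range f).subtype (LinearMap.range f).mkQ
          (Submodule.mkQ_surjective _) hex₂ homI hN.2
  · -- extensions
    intro A E C _ _ _ _ _ _ hA hC i p hi hp hex
    constructor
    · intro f
      have hfi : ∀ a, f (i a) = 0 := by
        intro a
        have := LinearMap.congr_fun (hA.1 (f ∘ₗ i)) a
        simpa using this
      obtain ⟨g, hg⟩ := descend' p f hp (by
        intro x hx
        have : x ∈ LinearMap.range i := by rw [← hex]; exact hx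
        obtain ⟨a, rfl⟩ := this
        exact hfi a)
      have hg0 : g = 0 := hC.1 g
      ext x
      obtain ⟨c, hc⟩ : ∃ c, p x = c := ⟨p x, rfl⟩
      have := hg x
      rw [hg0] at this
      simpa using this.symm
    · exact ext_ext_zero i p hi hp hex hA.2 hC.2
  · -- hereditariness: Ext² = 0
    intro A B C _ _ _ _ _ _ hA hB hC g hg X _ _ iX pX hiX hpX hex
    exact part3_aux hH inferInstance (Finsupp.linearCombination Λ (_root_.id : A → A))
      (Finsupp.linearCombination_surjective Λ Function.surjective_id) g hg iX pX hiX hpX hex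
end

section
/- Let r, s be positive integers with rs ≥ 4, and let (a_t)_{t≥0}, (b_t)_{t≥0} be sequences of positive reals satisfying a_t = s·b_t − a_{t−1} for t ≥ 1 and b_{t+1} = r·a_t − b_t for t ≥ 0, with initial condition b_0·√s < a_0·√r. Then for all t ≥ 0: b_t·√s < a_t·√r < b_{t+1}·√s. -/
/-- The numerical core of the total-order theorem for rank-2
representation-infinite hereditary artin algebras: with `r*s ≥ 4`, positive
sequences satisfying the Auslander–Reiten recurrences
`a t = s * b t - a (t-1)` and `b (t+1) = r * a t - b t`, and the initial
inequality `b 0 * √s < a 0 * √r`, satisfy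
`b t * √s < a t * √r < b (t + 1) * √s` for all `t`. -/
theorem rank_two_total_order (r s : ℕ) (hr : 1 ≤ r) (hs : 1 ≤ s) (hrs : 4 ≤ r * s)
    (a b : ℕ → ℝ) (ha : ∀ t, 0 < a t) (hb : ∀ t, 0 < b t)
    (hrec1 : ∀ t, a (t + 1) = s * b (t + 1) - a t)
    (hrec2 : ∀ t, b (t + 1) = r * a t - b t)
    (h0 : b 0 * Real.sqrt s < a 0 * Real.sqrt r) :
    ∀ t, b t * Real.sqrt s < a t * Real.sqrt r ∧
      a t * Real.sqrt r < b (t + 1) * Real.sqrt s := by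
  have hrpos : (0:ℝ) < r := by exact_mod_cast hr
  have hspos : (0:ℝ) < s := by exact_mod_cast hs
  have har : 0 < Real.sqrt r := Real.sqrt_pos.mpr hrpos
  have has : 0 < Real.sqrt s := Real.sqrt_pos.mpr hspos
  have hr2 : Real.sqrt r ^ 2 = r := Real.sq_sqrt hrpos.le
  have hs2 : Real.sqrt s ^ 2 = s := Real.sq_sqrt hspos.le
  have hsr : (2:ℝ) ≤ Real.sqrt r * Real.sqrt s := by
    rw [← Real.sqrt_mul hrpos.le]
    rw [show ((r:ℝ) * s) = ((r*s : ℕ) : ℝ) by push_cast; ring]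
    have h4 : (4:ℝ) ≤ ((r*s : ℕ) : ℝ) := by exact_mod_cast hrs
    nlinarith [Real.sq_sqrt (by linarith : (0:ℝ) ≤ ((r*s:ℕ):ℝ)),
      Real.sqrt_nonneg ((r*s:ℕ):ℝ)]
  have stepA : ∀ t, b t * Real.sqrt s < a t * Real.sqrt r →
      a t * Real.sqrt r < b (t + 1) * Real.sqrt s := by
    intro t h
    rw [hrec2 t]
    have key : 0 ≤ a t * Real.sqrt r * (Real.sqrt r * Real.sqrt s - 2) :=
      mul_nonneg (mul_pos (ha t) har).le (by linarith)
    have hid : (r:ℝ) * a t * Real.sqrt s = a t * Real.sqrt r * (Real.sqrt r * Real.sqrt s) := by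
      linear_combination (-(a t * Real.sqrt s)) * Real.mul_self_sqrt hrpos.le
    nlinarith [key, hid, h]
  have stepB : ∀ t, a t * Real.sqrt r < b (t + 1) * Real.sqrt s →
      b (t + 1) * Real.sqrt s < a (t + 1) * Real.sqrt r := by
    intro t h
    rw [hrec1 t]
    have key : 0 ≤ b (t + 1) * Real.sqrt s * (Real.sqrt r * Real.sqrt s - 2) :=
      mul_nonneg (mul_pos (hb (t + 1)) has).le (by linarith)
    have hid : (s:ℝ) * b (t + 1) * Real.sqrt r = b (t + 1) * Real.sqrt s * (Real.sqrt r * Real.sqrt s) := by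
      linear_combination (-(b (t + 1) * Real.sqrt r)) * Real.mul_self_sqrt hspos.le
    nlinarith [key, hid, h]
  intro t
  induction t with
  | zero => exact ⟨h0, stepA 0 h0⟩
  | succ n ih =>
    have h1 := stepB n ih.2
    exact ⟨h1, stepA (n + 1) h1⟩
end

section
/- Let r, s be positive integers and a, b, c positive reals satisfying b + c = r·a (or dually a relation with s), with rs ≥ 4 and b·√s < a·√r. Then a·√r < c·√s. More precisely: if b√s < a√r and c = r·a − b, then assuming c√s ≤ a√r leads to the contradiction 2(b + c) = 2ra > (b+c)√(rs) ≥ 2(b+c); hence a√r < c√s. -/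
/-- The inductive step in ordering the preprojective modules of a rank-2
representation-infinite hereditary algebra: if `r*s ≥ 4`, `c = r*a - b` and
`b*√s < a*√r` (with `a, b, c > 0`), then `a*√r < c*√s`. -/
theorem rank_two_inductive_step (r s : ℕ) (hr : 1 ≤ r) (hs : 1 ≤ s) (hrs : 4 ≤ r * s)
    (a b c : ℝ) (ha : 0 < a) (hb : 0 < b) (hc : 0 < c)
    (hcab : c = r * a - b) (h : b * Real.sqrt s < a * Real.sqrt r) :
    a * Real.sqrt r < c * Real.sqrt s := by
  by_contra h'
  push_neg at h'
  have hsr : 0 ≤ Real.sqrt r := Real.sqrt_nonneg _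
  have hss : 0 ≤ Real.sqrt s := Real.sqrt_nonneg _
  have hbc : b + c = r * a := by rw [hcab]; ring
  -- b√(rs) < a r
  have h1 : b * (Real.sqrt r * Real.sqrt s) < a * r := by
    have := mul_lt_mul_of_pos_left h (Real.sqrt_pos.mpr (by exact_mod_cast hr : (0:ℝ) < r))
    have hrr : Real.sqrt r * Real.sqrt r = r := Real.mul_self_sqrt (by positivity)
    nlinarith
  have h2 : c * (Real.sqrt r * Real.sqrt s) ≤ a * r := by
    have := mul_le_mul_of_nonneg_left h' hsr
    have hrr : Real.sqrt r * Real.sqrt r = r := Real.mul_self_sqrt (by positivity)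
    nlinarith
  have h3 : (2:ℝ) ≤ Real.sqrt r * Real.sqrt s := by
    rw [← Real.sqrt_mul (by positivity)]
    have : (4:ℝ) ≤ (r:ℝ) * s := by exact_mod_cast hrs
    nlinarith [Real.sq_sqrt (show (0:ℝ) ≤ (r:ℝ)*s by positivity),
      Real.sqrt_nonneg ((r:ℝ)*s)]
  nlinarith [mul_le_mul_of_nonneg_left h3 (show (0:ℝ) ≤ b + c by linarith)]
end

section
/- Let Λ be a connected representation-infinite hereditary artin algebra of rank 2, with Euler form matrix [[u, −m],[0, v]] where m = r·u = s·v and rs ≥ 4. Define sequences of dimension vectors by the reflection/AR-recurrences: d(1,t) = s·d(2,t) − d(1,t−1) and d(2,t+1) = r·d(1,t) − d(2,t), with d(2,0), d(1,0) the dimension vectors of the simple projective and the other projective. Then all terms d(1,t), d(2,t) are positive (have positive length) for all t ≥ 0, and the sequence of lengths ℓ(d(2,0)), ℓ(d(1,0)), ℓ(d(2,1)), ℓ(d(1,1)), … normalized by dividing by √u or √v respectively, is strictly increasing. -/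
/-- Abstract step lemma: if `2 ≤ c` and `0 < x < y` then `y < c*y - x`. -/
lemma preproj_step_aux (c x y : ℝ) (hc : 2 ≤ c) (hx : 0 < x) (hxy : x < y) :
    y < c * y - x := by
  nlinarith [mul_nonneg (by linarith : (0:ℝ) ≤ c - 2) (by linarith : (0:ℝ) ≤ y)]

/-- For a connected representation-infinite rank-2 hereditary artin algebra
with Euler form `[[u, -m], [0, v]]`, `m = r*u = s*v`, `r*s ≥ 4`, the dimension
vectors of the preprojective modules, defined by the reflection recurrences
from `d(2,0) = dim S(2)` and `d(1,0) = dim P(1)`, have positive length for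
every positive additive function `L`, and the lengths normalized by `√u`,
`√v` form a strictly increasing sequence. -/
theorem preprojective_dimension_vectors_increasing
    (u v m r s : ℕ) (hu : 0 < u) (hv : 0 < v)
    (hm1 : m = r * u) (hm2 : m = s * v) (hrs : 4 ≤ r * s)
    (d1 d2 : ℕ → ℤ × ℤ)
    (h20 : d2 0 = (0, 1)) (h10 : d1 0 = (1, (s : ℤ)))
    (hrec1 : ∀ t, d1 (t + 1) = (s : ℤ) • d2 (t + 1) - d1 t)
    (hrec2 : ∀ t, d2 (t + 1) = (r : ℤ) • d1 t - d2 t)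
    (l1 l2 : ℝ) (hl1 : 0 < l1) (hl2 : 0 < l2) :
    (∀ t, 0 < (d1 t).1 * l1 + (d1 t).2 * l2 ∧ 0 < (d2 t).1 * l1 + (d2 t).2 * l2) ∧
    (∀ t, ((d2 t).1 * l1 + (d2 t).2 * l2) / Real.sqrt v
            < ((d1 t).1 * l1 + (d1 t).2 * l2) / Real.sqrt u ∧
          ((d1 t).1 * l1 + (d1 t).2 * l2) / Real.sqrt u
            < ((d2 (t + 1)).1 * l1 + (d2 (t + 1)).2 * l2) / Real.sqrt v) := by
  set f : ℕ → ℝ := fun t => ((d1 t).1 : ℝ) * l1 + ((d1 t).2 : ℝ) * l2 with hfdef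
  set g : ℕ → ℝ := fun t => ((d2 t).1 : ℝ) * l1 + ((d2 t).2 : ℝ) * l2 with hgdef
  set su := Real.sqrt u with hsudef
  set sv := Real.sqrt v with hsvdef
  set c := Real.sqrt ((r : ℝ) * (s : ℝ)) with hcdef
  have hsu : (0:ℝ) < su := Real.sqrt_pos.mpr (by exact_mod_cast hu)
  have hsv : (0:ℝ) < sv := Real.sqrt_pos.mpr (by exact_mod_cast hv)
  have hrs' : (4:ℝ) ≤ (r:ℝ) * (s:ℝ) := by exact_mod_cast hrs
  have hc : (2:ℝ) ≤ c := by
    have h4 : Real.sqrt 4 ≤ c := Real.sqrt_le_sqrt hrs'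
    have : Real.sqrt 4 = 2 := by
      rw [show (4:ℝ) = 2 ^ 2 by norm_num, Real.sqrt_sq (by norm_num)]
    linarith
  -- key identities
  have hn1 : r * r * u = (r * s) * v := by
    rw [mul_assoc, ← hm1, hm2]; ring
  have hn2 : s * s * v = (r * s) * u := by
    rw [mul_assoc, ← hm2, hm1]; ring
  have hcast1 : (r:ℝ) * (r:ℝ) * (u:ℝ) = ((r:ℝ) * (s:ℝ)) * (v:ℝ) := by exact_mod_cast hn1
  have hcast2 : (s:ℝ) * (s:ℝ) * (v:ℝ) = ((r:ℝ) * (s:ℝ)) * (u:ℝ) := by exact_mod_cast hn2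
  have key_r : (r:ℝ) * su = c * sv := by
    show (r:ℝ) * Real.sqrt u = Real.sqrt ((r:ℝ) * (s:ℝ)) * Real.sqrt v
    rw [← Real.sqrt_mul (by positivity) (v:ℝ), ← hcast1,
      Real.sqrt_mul (by positivity) (u:ℝ), Real.sqrt_mul_self (by positivity)]
  have key_s : (s:ℝ) * sv = c * su := by
    show (s:ℝ) * Real.sqrt v = Real.sqrt ((r:ℝ) * (s:ℝ)) * Real.sqrt u
    rw [← Real.sqrt_mul (by positivity) (u:ℝ), ← hcast2,
      Real.sqrt_mul (by positivity) (v:ℝ), Real.sqrt_mul_self (by positivity)]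
  -- real recurrences
  have hgrec : ∀ t, g (t + 1) = (r:ℝ) * f t - g t := by
    intro t
    have h := hrec2 t
    rw [Prod.ext_iff] at h
    obtain ⟨h1, h2⟩ := h
    simp only [Prod.smul_fst, Prod.smul_snd, Prod.fst_sub, Prod.snd_sub, smul_eq_mul] at h1 h2
    simp only [hgdef, hfdef]
    push_cast [h1, h2]
    ring
  have hfrec : ∀ t, f (t + 1) = (s:ℝ) * g (t + 1) - f t := by
    intro t
    have h := hrec1 t
    rw [Prod.ext_iff] at h
    obtain ⟨h1, h2⟩ := h
    simp only [Prod.smul_fst, Prod.smul_snd, Prod.fst_sub, Prod.snd_sub, smul_eq_mul] at h1 h2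
    simp only [hgdef, hfdef]
    push_cast [h1, h2]
    ring
  have hg0 : g 0 = l2 := by simp [hgdef, h20]
  have hf0 : f 0 = l1 + (s:ℝ) * l2 := by simp [hfdef, h10]
  -- normalized recurrences
  have hA : ∀ t, g (t + 1) * su = c * (f t * sv) - g t * su := by
    intro t
    rw [hgrec t]
    linear_combination (f t) * key_r
  have hB : ∀ t, f (t + 1) * sv = c * (g (t + 1) * su) - f t * sv := by
    intro t
    rw [hfrec t]
    linear_combination (g (t + 1)) * key_s
  -- main induction
  have main : ∀ t, 0 < g t * su ∧ g t * su < f t * sv ∧ f t * sv < g (t + 1) * su := by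
    intro t
    induction t with
    | zero =>
      have h1 : 0 < g 0 * su := by rw [hg0]; positivity
      have h2 : g 0 * su < f 0 * sv := by
        rw [hg0, hf0]
        nlinarith [mul_pos hl1 hsv, mul_pos hl2 hsu,
          mul_nonneg (by linarith : (0:ℝ) ≤ c - 2) (mul_pos hl2 hsu).le, key_s]
      have h3 : f 0 * sv < g 1 * su := by
        rw [show (1:ℕ) = 0 + 1 from rfl, hA 0]
        exact preproj_step_aux c (g 0 * su) (f 0 * sv) hc h1 h2
      exact ⟨h1, h2, h3⟩
    | succ t ih =>
      obtain ⟨ih1, ih2, ih3⟩ := ih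
      have h1 : 0 < g (t + 1) * su := lt_trans (lt_trans ih1 ih2) ih3
      have h2 : g (t + 1) * su < f (t + 1) * sv := by
        rw [hB t]
        exact preproj_step_aux c (f t * sv) (g (t + 1) * su) hc (lt_trans ih1 ih2) ih3
      have h3 : f (t + 1) * sv < g (t + 2) * su := by
        rw [hA (t + 1)]
        exact preproj_step_aux c (g (t + 1) * su) (f (t + 1) * sv) hc h1 h2
      exact ⟨h1, h2, h3⟩
  constructor
  · intro t
    obtain ⟨m1, m2, _⟩ := main t
    constructor
    · have hfp : 0 < f t * sv := lt_trans m1 m2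
      have : 0 < f t := by nlinarith
      exact this
    · have : 0 < g t := by nlinarith
      exact this
  · intro t
    obtain ⟨m1, m2, m3⟩ := main t
    constructor
    · rw [div_lt_div_iff₀ hsv hsu]
      exact m2
    · rw [div_lt_div_iff₀ hsu hsv]
      exact m3
end
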